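/- In a normal topological space X, for any two disjoint F_σ subsets A and B there exists a functionally G_δ set C with A ⊆ C and C ∩ B = ∅. -/

import Mathlib

def Cozero {X : Type*} [TopologicalSpace X] (U : Set X) : Prop :=
  ∃ g : X → ℝ, Continuous g ∧ U = g ⁻¹' ({0}ᶜ)

def FunctionallyGDelta {X : Type*} [TopologicalSpace X] (A : Set X) : Prop :=
  ∃ U : ℕ → Set X, (∀ n, Cozero (U n)) ∧ A = ⋂ n, U n

def IsFSigma {X : Type*} [TopologicalSpace X] (A : Set X) : Prop :=
  ∃ F : ℕ → Set X, (∀ n, IsClosed (F n)) ∧ A = ⋃ n, F n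

/-- Key step: an `F_σ` set disjoint from a closed set `G` is contained in a cozero set
missing `G`, built as a weighted sum of Urysohn functions. -/
lemma cozero_of_fsigma_closed {X : Type*} [TopologicalSpace X] [NormalSpace X]
    {F : ℕ → Set X} (hF : ∀ n, IsClosed (F n)) {G : Set X} (hG : IsClosed G)
    (hd : ∀ n, Disjoint G (F n)) :
    ∃ U : Set X, Cozero U ∧ (⋃ n, F n) ⊆ U ∧ U ∩ G = ∅ := by
  choose f hf0 hf1 hmem using fun n =>
    exists_continuous_zero_one_of_isClosed hG (hF n) (hd n)
  set g : X → ℝ := fun x => ∑' n, (2:ℝ)⁻¹ ^ n * f n x with hg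
  have hbound : ∀ n x, ‖(2:ℝ)⁻¹ ^ n * f n x‖ ≤ (2:ℝ)⁻¹ ^ n := by
    intro n x
    rw [Real.norm_eq_abs, abs_mul]
    have h := hmem n x
    have : |f n x| ≤ 1 := abs_le.2 ⟨by linarith [h.1], h.2⟩
    calc |(2:ℝ)⁻¹ ^ n| * |f n x| ≤ |(2:ℝ)⁻¹ ^ n| * 1 :=
          mul_le_mul_of_nonneg_left this (abs_nonneg _)
      _ = (2:ℝ)⁻¹ ^ n := by rw [mul_one, abs_of_nonneg (by positivity)]
  have hsum : Summable fun n => (2:ℝ)⁻¹ ^ n :=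
    summable_geometric_of_lt_one (by norm_num) (by norm_num)
  have hcont : Continuous g :=
    continuous_tsum (fun n => (continuous_const.mul (f n).continuous)) hsum hbound
  have hsummable : ∀ x, Summable fun n => (2:ℝ)⁻¹ ^ n * f n x := fun x =>
    hsum.of_norm_bounded (fun n => hbound n x)
  refine ⟨g ⁻¹' ({0}ᶜ), ⟨g, hcont, rfl⟩, ?_, ?_⟩
  · rintro x hx
    obtain ⟨n, hn⟩ := Set.mem_iUnion.1 hx
    have hpos : 0 < g x := by
      refine Summable.tsum_pos (hsummable x) (fun m => ?_) n ?_
      · have h := (hmem m x).1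
        positivity
      · have : f n x = 1 := hf1 n hn
        rw [this, mul_one]
        positivity
    exact fun h => hpos.ne' h
  · ext x
    simp only [Set.mem_inter_iff, Set.mem_preimage, Set.mem_compl_iff, Set.mem_singleton_iff,
      Set.mem_empty_iff_false, iff_false, not_and]
    intro hgx hxG
    apply hgx
    have : ∀ n, (2:ℝ)⁻¹ ^ n * f n x = 0 := by
      intro n
      have : f n x = 0 := hf0 n hxG
      rw [this, mul_zero]
    calc g x = ∑' n, (2:ℝ)⁻¹ ^ n * f n x := rfl
      _ = ∑' _ : ℕ, (0:ℝ) := by exact tsum_congr this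
      _ = 0 := tsum_zero

/-- Veselý's lemma: in a normal space, any two disjoint `F_σ` sets `A` and `B` can be
separated by a functionally `G_δ` set `C` with `A ⊆ C` and `C ∩ B = ∅`. -/
theorem vesely_separation {X : Type*} [TopologicalSpace X] [NormalSpace X] {A B : Set X}
    (hA : IsFSigma A) (hB : IsFSigma B) (hAB : Disjoint A B) :
    ∃ C : Set X, FunctionallyGDelta C ∧ A ⊆ C ∧ C ∩ B = ∅ := by
  obtain ⟨F, hFcl, rfl⟩ := hA
  obtain ⟨G, hGcl, rfl⟩ := hB
  have hd : ∀ m n, Disjoint (G m) (F n) := fun m n =>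
    Set.disjoint_of_subset (Set.subset_iUnion G m) (Set.subset_iUnion F n) hAB.symm
  choose U hUcoz hUsub hUdisj using fun m =>
    cozero_of_fsigma_closed hFcl (hGcl m) (hd m)
  refine ⟨⋂ m, U m, ⟨U, hUcoz, rfl⟩, Set.subset_iInter hUsub, ?_⟩
  ext x
  simp only [Set.mem_inter_iff, Set.mem_iInter, Set.mem_iUnion, Set.mem_empty_iff_false,
    iff_false, not_and]
  rintro hU ⟨m, hm⟩
  exact Set.eq_empty_iff_forall_notMem.1 (hUdisj m) x ⟨hU m, hm⟩
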